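/- There exists a rooted tree T on m ≥ n/2 vertices with a_t(T) = 1, constructed as follows: the root v has children v_0, v_1, …, v_{i+j} where j = ⌈√(n/2)⌉ and i is the largest integer with 2^i ≤ j; v_0 is a leaf, v_ℓ has 2^ℓ − 1 leaf children for 1 ≤ ℓ ≤ i, and v_ℓ has j leaf children for i < ℓ ≤ i+j. Moreover, n/2 ≤ |V(T)| ≤ (1+o(1))·n/2, and the root can acquire all the weight. -/

import Mathlib

open Filter

/-- A total acquisition move in graph `G`. -/
def AcqMove {V : Type*} [DecidableEq V] (G : SimpleGraph V) (w w' : V → ℕ) : Prop :=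
  ∃ u v, G.Adj u v ∧ 0 < w u ∧ w u ≤ w v ∧
    w' = Function.update (Function.update w u 0) v (w v + w u)

/-- Reachability by acquisition moves. -/
def AcqReach {V : Type*} [DecidableEq V] (G : SimpleGraph V) : (V → ℕ) → (V → ℕ) → Prop :=
  Relation.ReflTransGen (AcqMove G)

/-- No legal acquisition move remains. -/
def AcqMaximal {V : Type*} [DecidableEq V] (G : SimpleGraph V) (w : V → ℕ) : Prop :=
  ¬ ∃ w', AcqMove G w w'

/-- The size of the residual set. -/
noncomputable def residualCard {V : Type*} (w : V → ℕ) : ℕ :=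
  Nat.card {v : V // 0 < w v}

/-- The total acquisition number of `G`. -/
noncomputable def atNum {V : Type*} [DecidableEq V] (G : SimpleGraph V) : ℕ :=
  sInf { k | ∃ w, AcqReach G (fun _ => 1) w ∧ AcqMaximal G w ∧ residualCard w = k }

namespace Stmt13

/-- `j = ⌈√(n/2)⌉`. -/
noncomputable def jj (n : ℕ) : ℕ := ⌈Real.sqrt ((n : ℝ) / 2)⌉₊

/-- `i` is the largest integer with `2^i ≤ j`. -/
noncomputable def ii (n : ℕ) : ℕ := Nat.log 2 (jj n)

/-- The child `v_ℓ` of the root has: no children if `ℓ = 0`; `2^ℓ − 1` children if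
`1 ≤ ℓ ≤ i`; and `j` children if `i < ℓ ≤ i + j`. -/
noncomputable def numCh (n : ℕ) (ℓ : ℕ) : ℕ :=
  if ℓ = 0 then 0 else if ℓ ≤ ii n then 2 ^ ℓ - 1 else jj n

/-- The vertex set: the root, the children `v_0, …, v_{i+j}` of the root, and the
grandchildren. -/
def Vtx (n : ℕ) : Type :=
  Unit ⊕ (Fin (1 + ii n + jj n) ⊕ Σ ℓ : Fin (1 + ii n + jj n), Fin (numCh n ℓ.val))

noncomputable instance (n : ℕ) : Fintype (Vtx n) := by unfold Vtx; infer_instance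

noncomputable instance (n : ℕ) : DecidableEq (Vtx n) := by unfold Vtx; infer_instance

/-- The root. -/
def root (n : ℕ) : Vtx n := Sum.inl ()

/-- The tree: the root is adjacent to each `v_ℓ`, and each `v_ℓ` to its children. -/
def tree (n : ℕ) : SimpleGraph (Vtx n) :=
  SimpleGraph.fromRel fun a b =>
    (∃ ℓ, a = Sum.inl () ∧ b = Sum.inr (Sum.inl ℓ)) ∨
    (∃ (ℓ : Fin (1 + ii n + jj n)) (x : Fin (numCh n ℓ.val)),
      a = Sum.inr (Sum.inl ℓ) ∧ b = Sum.inr (Sum.inr ⟨ℓ, x⟩))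

end Stmt13


/-! ### Auxiliary lemmas -/


/-! ### Auxiliary general lemmas -/

section GeneralAcq

variable {V : Type*} [DecidableEq V] {G : SimpleGraph V}

lemma acq_collect (p : V → V) :
    ∀ (L : List V), L.Nodup →
    (∀ g ∈ L, G.Adj g (p g)) →
    (∀ g ∈ L, ∀ g' ∈ L, g ≠ p g') →
    ∀ (w : V → ℕ), (∀ g ∈ L, 0 < w g ∧ w g ≤ w (p g)) →
    AcqReach G w
      (fun x => if x ∈ L then 0 else w x + ((L.filter (fun g => p g = x)).map w).sum)
  | [], _, _, _, w, _ => by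
      have : (fun x => if x ∈ ([] : List V) then 0
          else w x + ((List.filter (fun g => p g = x) []).map w).sum) = w := by
        funext x; simp
      rw [this]
      exact Relation.ReflTransGen.refl
  | g :: L, hnd, hadj, hdis, w, hw => by
      have hgL : g ∉ L := (List.nodup_cons.mp hnd).1
      have hndL := (List.nodup_cons.mp hnd).2
      have hgm : g ∈ g :: L := List.mem_cons_self
      obtain ⟨hw0, hwle⟩ := hw g hgm
      set w1 : V → ℕ := Function.update (Function.update w g 0) (p g) (w (p g) + w g) with hw1
      have hmove : AcqMove G w w1 := ⟨g, p g, hadj g hgm, hw0, hwle, rfl⟩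
      have hne : ∀ g' ∈ L, g' ≠ g := fun g' h' => fun e => hgL (e ▸ h')
      have hgnepg : g ≠ p g := (hadj g hgm).ne
      have hw1eq : ∀ g' ∈ L, w1 g' = w g' := by
        intro g' h'
        have h1 : g' ≠ p g := hdis g' (List.mem_cons_of_mem _ h') g hgm
        have h2 : g' ≠ g := hne g' h'
        simp [hw1, Function.update_of_ne h1, Function.update_of_ne h2]
      have ih := acq_collect p L hndL
        (fun g' h' => hadj g' (List.mem_cons_of_mem _ h'))
        (fun a ha b hb => hdis a (List.mem_cons_of_mem _ ha) b (List.mem_cons_of_mem _ hb))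
        w1
        (by
          intro g' h'
          refine ⟨?_, ?_⟩
          · rw [hw1eq g' h']; exact (hw g' (List.mem_cons_of_mem _ h')).1
          · rw [hw1eq g' h']
            have hb := (hw g' (List.mem_cons_of_mem _ h')).2
            have hpne : p g' ≠ g := (hdis g hgm g' (List.mem_cons_of_mem _ h')).symm
            by_cases hpp : p g' = p g
            · rw [hpp]
              simp only [hw1, Function.update_self]
              calc w g' ≤ w (p g') := hb
                _ = w (p g) := by rw [hpp]
                _ ≤ w (p g) + w g := Nat.le_add_right _ _
            · rw [hw1, Function.update_of_ne hpp, Function.update_of_ne hpne]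
              exact hb)
      have hfin : (fun x => if x ∈ L then 0
            else w1 x + ((L.filter (fun g' => p g' = x)).map w1).sum)
          = (fun x => if x ∈ g :: L then 0
            else w x + (((g :: L).filter (fun g' => p g' = x)).map w).sum) := by
        funext x
        by_cases hxL : x ∈ L
        · simp [hxL, List.mem_cons_of_mem]
        · have hsum : ((L.filter (fun g' => p g' = x)).map w1).sum
              = ((L.filter (fun g' => p g' = x)).map w).sum := by
            congr 1
            apply List.map_congr_left
            intro a ha
            exact hw1eq a (List.mem_of_mem_filter ha)
          by_cases hxg : x = g
          · subst hxg
            have hw1x : w1 x = 0 := by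
              rw [hw1, Function.update_of_ne hgnepg, Function.update_self]
            have hflt : L.filter (fun g' => p g' = x) = [] := by
              apply List.filter_eq_nil_iff.mpr
              intro a ha
              simp only [decide_eq_true_eq]
              exact fun e => (hdis x hgm a (List.mem_cons_of_mem _ ha)) e.symm
            simp [hxL, hw1x, hflt, hgm]
          · have hxm : x ∉ g :: L := by
              intro h; rcases List.mem_cons.mp h with h | h
              exacts [hxg h, hxL h]
            by_cases hxp : x = p g
            · have hw1x : w1 x = w x + w g := by
                subst hxp; simp [hw1, Function.update_self]
              have hflt : (g :: L).filter (fun g' => p g' = x)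
                  = g :: L.filter (fun g' => p g' = x) := by
                rw [List.filter_cons_of_pos]; simp [hxp]
              simp only [hxL, if_neg, hxm, if_neg (fun h => hxm h), hsum, hw1x, hflt,
                List.map_cons, List.sum_cons]
              simp [hxL, hxm]
              omega
            · have hw1x : w1 x = w x := by
                simp [hw1, Function.update_of_ne hxp, Function.update_of_ne hxg]
              have hflt : (g :: L).filter (fun g' => p g' = x)
                  = L.filter (fun g' => p g' = x) := by
                rw [List.filter_cons_of_neg]
                simp only [decide_eq_true_eq]
                exact fun h => hxp h.symm
              simp [hxL, hxm, hsum, hw1x, hflt]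
      exact Relation.ReflTransGen.head hmove (hfin ▸ ih)

lemma acq_absorb (v : V) :
    ∀ (L : List V), L.Nodup → v ∉ L →
    (∀ x ∈ L, G.Adj x v) →
    ∀ (w : V → ℕ),
    (∀ k, (hk : k < L.length) → 0 < w (L.get ⟨k, hk⟩) ∧
      w (L.get ⟨k, hk⟩) ≤ w v + ((L.take k).map w).sum) →
    AcqReach G w (fun x => if x ∈ L then 0 else if x = v then w v + (L.map w).sum else w x)
  | [], _, _, _, w, _ => by
      have : (fun x => if x ∈ ([] : List V) then 0
          else if x = v then w v + (([] : List V).map w).sum else w x) = w := by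
        funext x; by_cases h : x = v <;> simp [h]
      rw [this]
      exact Relation.ReflTransGen.refl
  | a :: L, hnd, hv, hadj, w, hc => by
      have haL : a ∉ L := (List.nodup_cons.mp hnd).1
      have hndL := (List.nodup_cons.mp hnd).2
      have hvL : v ∉ L := fun h => hv (List.mem_cons_of_mem _ h)
      have hav : a ≠ v := fun h => hv (h ▸ List.mem_cons_self)
      have h0 := hc 0 (by simp)
      simp only [List.get, List.take, List.map_nil, List.sum_nil, Nat.add_zero] at h0
      set w1 : V → ℕ := Function.update (Function.update w a 0) v (w v + w a) with hw1
      have hmove : AcqMove G w w1 :=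
        ⟨a, v, hadj a (List.mem_cons_self), h0.1, h0.2, rfl⟩
      have hw1eq : ∀ x ∈ L, w1 x = w x := by
        intro x hx
        have h1 : x ≠ v := fun e => hvL (e ▸ hx)
        have h2 : x ≠ a := fun e => haL (e ▸ hx)
        rw [hw1, Function.update_of_ne h1, Function.update_of_ne h2]
      have hw1v : w1 v = w v + w a := by rw [hw1, Function.update_self]
      have ih := acq_absorb v L hndL hvL
        (fun x hx => hadj x (List.mem_cons_of_mem _ hx)) w1
        (by
          intro k hk
          have hk' : k + 1 < (a :: L).length := by simpa using Nat.succ_lt_succ hk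
          have := hc (k + 1) hk'
          have hget : (a :: L).get ⟨k + 1, hk'⟩ = L.get ⟨k, hk⟩ := rfl
          rw [hget] at this
          have htake : ((a :: L).take (k + 1)).map w = w a :: (L.take k).map w := rfl
          rw [htake] at this
          have hmem : L.get ⟨k, hk⟩ ∈ L := List.get_mem L _
          constructor
          · rw [hw1eq _ hmem]; exact this.1
          · rw [hw1eq _ hmem, hw1v]
            have hmap : (L.take k).map w1 = (L.take k).map w :=
              List.map_congr_left fun x hx => hw1eq x (List.mem_of_mem_take hx)
            rw [hmap]
            simp only [List.sum_cons] at this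
            omega)
      have hfin : (fun x => if x ∈ L then 0
            else if x = v then w1 v + (L.map w1).sum else w1 x)
          = (fun x => if x ∈ a :: L then 0
            else if x = v then w v + ((a :: L).map w).sum else w x) := by
        funext x
        have hmap : L.map w1 = L.map w := List.map_congr_left hw1eq
        by_cases hxL : x ∈ L
        · simp [hxL, List.mem_cons_of_mem]
        · by_cases hxa : x = a
          · subst hxa
            have : w1 x = 0 := by
              rw [hw1, Function.update_of_ne hav, Function.update_self]
            simp [hxL, hav, this, List.mem_cons_self]
          · have hxm : x ∉ a :: L := fun h => by
              rcases List.mem_cons.mp h with h | h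
              exacts [hxa h, hxL h]
            by_cases hxv : x = v
            · subst hxv
              simp only [if_neg hxL, if_pos rfl, if_neg (fun h => hxm h), hw1v, hmap,
                List.map_cons, List.sum_cons]
              simp [hxm]
              omega
            · have : w1 x = w x := by
                rw [hw1, Function.update_of_ne hxv, Function.update_of_ne hxa]
              simp [hxL, hxm, hxv, this]
      exact Relation.ReflTransGen.head hmove (hfin ▸ ih)

lemma acq_pos_invariant {w w' : V → ℕ} (h : AcqReach G w w') (h0 : ∃ v, 0 < w v) :
    ∃ v, 0 < w' v := by
  induction h with
  | refl => exact h0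
  | tail _ hm ih =>
      obtain ⟨u, v, _, hu, _, rfl⟩ := hm
      exact ⟨v, by simp [Function.update_self]; omega⟩

omit [DecidableEq V] in
lemma walk_cross {u v : V} (S : V → Prop)
    (hcross : ∀ a b, G.Adj a b → ¬ S a → S b → s(a, b) = s(u, v)) :
    ∀ {x y : V} (p : G.Walk x y), ¬ S x → S y → s(u, v) ∈ p.edges := by
  intro x y p
  induction p with
  | nil => intro hx hy; exact absurd hy hx
  | @cons x' z y' h q ih =>
      intro hx hy
      by_cases hz : S z
      · rw [SimpleGraph.Walk.edges_cons]
        exact (hcross x' z h hx hz) ▸ List.mem_cons_self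
      · rw [SimpleGraph.Walk.edges_cons]
        exact List.mem_cons_of_mem _ (ih hz hy)

lemma list_sum_range (g : ℕ → ℕ) (k : ℕ) :
    ((List.range k).map g).sum = ∑ m ∈ Finset.range k, g m := by
  induction k with
  | zero => simp
  | succ k ih => simp [List.range_succ, Finset.sum_range_succ, ih]

lemma len_filter_toList {α : Type*} (s : Finset α) (q : α → Prop) [DecidablePred q] :
    (s.toList.filter (fun a => q a)).length = (s.filter q).card := by
  rw [← Multiset.coe_card, ← Multiset.filter_coe q, Finset.coe_toList]
  rfl

end GeneralAcq
namespace Stmt13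

variable {n : ℕ}

/-- The `ℓ`-th child of the root. -/
def chl (n : ℕ) (ℓ : Fin (1 + ii n + jj n)) : Vtx n := Sum.inr (Sum.inl ℓ)

/-- A grandchild. -/
def grd (n : ℕ) (s : Σ ℓ : Fin (1 + ii n + jj n), Fin (numCh n ℓ.val)) : Vtx n :=
  Sum.inr (Sum.inr s)

lemma adj_root_chl (ℓ : Fin (1 + ii n + jj n)) : (tree n).Adj (root n) (chl n ℓ) := by
  rw [tree, SimpleGraph.fromRel_adj]
  exact ⟨by simp only [root, chl]; exact Sum.inl_ne_inr, Or.inl (Or.inl ⟨ℓ, rfl, rfl⟩)⟩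

lemma adj_chl_grd (s : Σ ℓ : Fin (1 + ii n + jj n), Fin (numCh n ℓ.val)) :
    (tree n).Adj (chl n s.1) (grd n s) := by
  rw [tree, SimpleGraph.fromRel_adj]
  exact ⟨fun h => Sum.inl_ne_inr (Sum.inr_injective h), Or.inl (Or.inr ⟨s.1, s.2, rfl, rfl⟩)⟩

lemma adj_cases {a b : Vtx n} (h : (tree n).Adj a b) :
    (∃ ℓ, (a = root n ∧ b = chl n ℓ) ∨ (b = root n ∧ a = chl n ℓ)) ∨
    (∃ s, (a = chl n s.1 ∧ b = grd n s) ∨ (b = chl n s.1 ∧ a = grd n s)) := by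
  rw [tree, SimpleGraph.fromRel_adj] at h
  obtain ⟨-, h⟩ := h
  rcases h with (⟨ℓ, rfl, rfl⟩ | ⟨ℓ, x, rfl, rfl⟩) | (⟨ℓ, rfl, rfl⟩ | ⟨ℓ, x, rfl, rfl⟩)
  · exact Or.inl ⟨ℓ, Or.inl ⟨rfl, rfl⟩⟩
  · exact Or.inr ⟨⟨ℓ, x⟩, Or.inl ⟨rfl, rfl⟩⟩
  · exact Or.inl ⟨ℓ, Or.inr ⟨rfl, rfl⟩⟩
  · exact Or.inr ⟨⟨ℓ, x⟩, Or.inr ⟨rfl, rfl⟩⟩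

lemma jj_pos (hn : 2 ≤ n) : 0 < jj n := by
  have hn' : (0 : ℝ) < (n : ℝ) / 2 := by
    have : (2 : ℝ) ≤ (n : ℝ) := by exact_mod_cast hn
    linarith
  exact Nat.ceil_pos.mpr (Real.sqrt_pos.mpr hn')

lemma pow_ii_le (hn : 2 ≤ n) : 2 ^ ii n ≤ jj n :=
  Nat.pow_log_le_self 2 (jj_pos hn).ne'

lemma jj_lt_pow : jj n < 2 ^ (ii n + 1) :=
  Nat.lt_pow_succ_log_self (by norm_num) _

lemma sumCh : ∀ k, k ≤ ii n + 1 → k + 1 + ∑ m ∈ Finset.range k, numCh n m = 2 ^ k := by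
  intro k
  induction k with
  | zero => simp
  | succ k ih =>
      intro hk
      have ihk := ih (by omega)
      rw [Finset.sum_range_succ]
      have h2 : 1 ≤ 2 ^ k := Nat.one_le_two_pow
      have hp : 2 ^ (k + 1) = 2 * 2 ^ k := by ring
      by_cases hk0 : k = 0
      · subst hk0; simp [numCh]
      · have hnum : numCh n k = 2 ^ k - 1 := by
          rw [numCh, if_neg hk0, if_pos (by omega)]
        omega

lemma cardV : Fintype.card (Vtx n)
    = 1 + (1 + ii n + jj n) + ∑ m ∈ Finset.range (1 + ii n + jj n), numCh n m := by
  have h : Fintype.card (Vtx n) = Fintype.card (Unit ⊕ (Fin (1 + ii n + jj n) ⊕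
      Σ ℓ : Fin (1 + ii n + jj n), Fin (numCh n ℓ.val))) := Fintype.card_congr' rfl
  rw [h]
  simp [Fintype.card_sum, Fintype.card_sigma, Fin.sum_univ_eq_sum_range]
  omega

lemma cardV' : Fintype.card (Vtx n) = 2 ^ (ii n + 1) + jj n + jj n * jj n := by
  have h1 := sumCh (n := n) (ii n + 1) le_rfl
  have hsplit : ∑ m ∈ Finset.range (1 + ii n + jj n), numCh n m
      = (∑ m ∈ Finset.range (ii n + 1), numCh n m)
        + ∑ m ∈ Finset.Ico (ii n + 1) (1 + ii n + jj n), numCh n m := by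
    rw [Finset.range_eq_Ico,
      ← Finset.sum_Ico_consecutive _ (Nat.zero_le _) (by omega : ii n + 1 ≤ 1 + ii n + jj n), Finset.range_eq_Ico]
  have hconst : ∑ m ∈ Finset.Ico (ii n + 1) (1 + ii n + jj n), numCh n m
      = jj n * jj n := by
    have heq : ∀ m ∈ Finset.Ico (ii n + 1) (1 + ii n + jj n), numCh n m = jj n := by
      intro m hm
      rw [Finset.mem_Ico] at hm
      rw [numCh, if_neg (by omega), if_neg (by omega)]
    rw [Finset.sum_congr rfl heq, Finset.sum_const, Nat.card_Ico, smul_eq_mul]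
    congr 1
    omega
  rw [cardV, hsplit, hconst]
  omega

end Stmt13
namespace Stmt13

variable {n : ℕ}

/-- Weights after the grandchildren have given their weight to their parents. -/
noncomputable def w2 (n : ℕ) : Vtx n → ℕ := fun x =>
  match x with
  | Sum.inl _ => 1
  | Sum.inr (Sum.inl ℓ) => 1 + numCh n ℓ.val
  | Sum.inr (Sum.inr _) => 0

/-- The final weight: everything at the root. -/
noncomputable def wfin (n : ℕ) : Vtx n → ℕ := fun x =>
  if x = root n then Fintype.card (Vtx n) else 0

lemma fiber_card (ℓ : Fin (1 + ii n + jj n)) :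
    (Finset.univ.filter
      (fun s : Σ m : Fin (1 + ii n + jj n), Fin (numCh n m.val) => s.1 = ℓ)).card
    = numCh n ℓ.val := by
  classical
  rw [← Fintype.card_subtype]
  rw [← Fintype.card_fin (numCh n ℓ.val)]
  apply Fintype.card_congr
  exact
    { toFun := fun s => Fin.cast (congrArg (fun t : Fin _ => numCh n t.val) s.2) s.1.2
      invFun := fun x => ⟨⟨ℓ, x⟩, rfl⟩
      left_inv := by rintro ⟨⟨m, x⟩, rfl⟩; rfl
      right_inv := by intro x; rfl }

lemma reach_w2 : AcqReach (tree n) (fun _ => 1) (w2 n) := by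
  classical
  set S : Finset (Σ m : Fin (1 + ii n + jj n), Fin (numCh n m.val)) := Finset.univ with hS
  set L1 : List (Vtx n) := S.toList.map (fun s => grd n s) with hL1
  have hinj : Function.Injective (fun s : Σ m : Fin (1 + ii n + jj n), Fin (numCh n m.val)
      => grd n s) := by
    intro a b h
    exact Sum.inr_injective (Sum.inr_injective h)
  have hnd : L1.Nodup := (Finset.nodup_toList S).map hinj
  set p1 : Vtx n → Vtx n := fun x =>
    match x with
    | Sum.inr (Sum.inr s) => chl n s.1
    | _ => root n
    with hp1
  have hmemL1 : ∀ x : Vtx n, x ∈ L1 ↔ ∃ s, x = grd n s := by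
    intro x
    simp only [hL1, List.mem_map, Finset.mem_toList, hS, Finset.mem_univ, true_and]
    exact ⟨fun ⟨s, h⟩ => ⟨s, h.symm⟩, fun ⟨s, h⟩ => ⟨s, h.symm⟩⟩
  have h := acq_collect (G := tree n) p1 L1 hnd
    (by
      rintro g hg
      obtain ⟨s, rfl⟩ := (hmemL1 g).mp hg
      exact (adj_chl_grd s).symm)
    (by
      rintro g hg g' hg'
      obtain ⟨s, rfl⟩ := (hmemL1 g).mp hg
      obtain ⟨s', rfl⟩ := (hmemL1 g').mp hg'
      exact fun h => Sum.inl_ne_inr (Sum.inr_injective h).symm)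
    (fun _ => 1)
    (fun g hg => ⟨Nat.one_pos, le_refl 1⟩)
  have hfin : (fun x => if x ∈ L1 then 0
      else 1 + ((L1.filter (fun g => p1 g = x)).map (fun _ => 1)).sum) = w2 n := by
    funext x
    match x with
    | Sum.inl () =>
        have hx : ¬ @Membership.mem (Vtx n) (List (Vtx n)) _ L1 (Sum.inl ()) := by
          intro hx; obtain ⟨s, h⟩ := (hmemL1 _).mp hx; exact Sum.inl_ne_inr h
        have hflt : L1.filter (fun g => @Eq (Vtx n) (p1 g) (Sum.inl ())) = [] := by
          apply List.filter_eq_nil_iff.mpr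
          intro g hg
          obtain ⟨s, rfl⟩ := (hmemL1 g).mp hg
          simp only [decide_eq_true_eq]
          exact fun h => Sum.inl_ne_inr h.symm
        simp [hx, hflt, w2]
        intro a ha; obtain ⟨s, rfl⟩ := (hmemL1 a).mp ha; exact fun h => Sum.inl_ne_inr h.symm
    | Sum.inr (Sum.inl ℓ) =>
        have hx : ¬ @Membership.mem (Vtx n) (List (Vtx n)) _ L1 (Sum.inr (Sum.inl ℓ)) := by
          intro hx; obtain ⟨s, h⟩ := (hmemL1 _).mp hx
          exact Sum.inl_ne_inr (Sum.inr_injective h)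
        have hsum : ((L1.filter (fun g => @Eq (Vtx n) (p1 g) (Sum.inr (Sum.inl ℓ)))).map
            (fun _ => 1)).sum = (L1.filter (fun g => @Eq (Vtx n) (p1 g) (Sum.inr (Sum.inl ℓ)))).length := by
          rw [List.map_const']
          simp
        have hlen : (L1.filter (fun g => @Eq (Vtx n) (p1 g) (Sum.inr (Sum.inl ℓ)))).length
            = numCh n ℓ.val := by
          rw [hL1, List.filter_map]
          rw [List.length_map]
          have : (fun g => decide (@Eq (Vtx n) (p1 g) (Sum.inr (Sum.inl ℓ))))
              ∘ (fun s : Σ m : Fin (1 + ii n + jj n), Fin (numCh n m.val) => grd n s)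
              = fun s => decide (s.1 = ℓ) := by
            funext s
            simp only [Function.comp_apply]
            congr 1
            simp only [eq_iff_iff]
            constructor
            · intro h
              exact Sum.inl_injective (Sum.inr_injective h)
            · intro h
              show (Sum.inr (Sum.inl s.1) : Vtx n) = Sum.inr (Sum.inl ℓ)
              exact congrArg (fun t => (Sum.inr (Sum.inl t) : Vtx n)) h
          rw [this]
          rw [len_filter_toList S (fun s => s.1 = ℓ)]
          exact fiber_card ℓ
        simp only [hx, if_neg (fun h => hx h), if_neg]
        refine (if_neg not_false).trans ?_
        convert congrArg (1 + ·) (hsum.trans hlen)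
        rfl
    | Sum.inr (Sum.inr s) =>
        have hx : @Membership.mem (Vtx n) (List (Vtx n)) _ L1 (Sum.inr (Sum.inr s)) := (hmemL1 _).mpr ⟨s, rfl⟩
        simp [hx, w2]
  rw [← hfin]
  exact h

end Stmt13
namespace Stmt13

variable {n : ℕ}

lemma take_finRange_sum (f : ℕ → ℕ) {k N : ℕ} (hk : k ≤ N) :
    (((List.finRange N).take k).map (fun ℓ : Fin N => f ℓ.val)).sum
      = ∑ m ∈ Finset.range k, f m := by
  have h1 : ((List.finRange N).take k).map (fun ℓ : Fin N => f ℓ.val)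
      = (((List.finRange N).take k).map Fin.val).map f := by
    rw [List.map_map]; rfl
  rw [h1, List.map_take, List.map_coe_finRange_eq_range, List.take_range, Nat.min_eq_left hk]
  exact list_sum_range f k

lemma get_map_finRange {α : Type*} {N : ℕ} (f : Fin N → α) (k : ℕ)
    (hk : k < ((List.finRange N).map f).length) :
    ((List.finRange N).map f).get ⟨k, hk⟩
      = f ⟨k, by simpa using hk⟩ := by
  simp only [List.get_eq_getElem, List.getElem_map, List.getElem_finRange]
  rfl

lemma reach_final (hn : 2 ≤ n) :
    AcqReach (tree n) (fun _ => 1) (wfin n) := by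
  classical
  set N := 1 + ii n + jj n with hN
  set L2 : List (Vtx n) := (List.finRange N).map (chl n) with hL2
  have hinj : Function.Injective (chl n) := by
    intro a b h
    exact Sum.inl_injective (Sum.inr_injective h)
  have hnd : L2.Nodup := (List.nodup_finRange N).map hinj
  have hroot : root n ∉ L2 := by
    rw [hL2]
    simp only [List.mem_map]
    rintro ⟨ℓ, -, h⟩
    exact Sum.inl_ne_inr h.symm
  have hlen : L2.length = N := by rw [hL2, List.length_map, List.length_finRange]
  have hget : ∀ (k : ℕ) (hk : k < L2.length),
      L2.get ⟨k, hk⟩ = chl n ⟨k, by simpa [hL2] using hk⟩ := by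
    intro k hk
    exact get_map_finRange (chl n) k hk
  have hw2chl : ∀ ℓ : Fin N, w2 n (chl n ℓ) = 1 + numCh n ℓ.val := fun _ => rfl
  have htake : ∀ k ≤ N, ((L2.take k).map (w2 n)).sum
      = ∑ m ∈ Finset.range k, (1 + numCh n m) := by
    intro k hk
    have e1 : (L2.take k).map (w2 n)
        = (((List.finRange N).take k).map (chl n)).map (w2 n) := by
      rw [hL2]
      simp [List.map_take]
    rw [e1, List.map_map]
    exact take_finRange_sum (fun m => 1 + numCh n m) hk
  have hsum1 : ∀ k, ∑ m ∈ Finset.range k, (1 + numCh n m)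
      = k + ∑ m ∈ Finset.range k, numCh n m := by
    intro k
    rw [Finset.sum_add_distrib, Finset.sum_const, smul_eq_mul, mul_one, Finset.card_range]
  have h := acq_absorb (G := tree n) (root n) L2 hnd hroot
    (by
      rintro x hx
      rw [hL2] at hx
      obtain ⟨ℓ, -, rfl⟩ := List.mem_map.mp hx
      exact (adj_root_chl ℓ).symm)
    (w2 n)
    (by
      intro k hk
      rw [hget k hk]
      have hkN : k < N := by rw [← hlen]; exact hk
      rw [hw2chl]
      simp only [Fin.val_mk]
      have hroot1 : w2 n (root n) = 1 := rfl
      rw [hroot1, htake k (le_of_lt hkN), hsum1 k]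
      refine ⟨by omega, ?_⟩
      by_cases hki : k ≤ ii n
      · by_cases hk0 : k = 0
        · subst hk0; simp [numCh]
        · have hnum : numCh n k = 2 ^ k - 1 := by rw [numCh, if_neg hk0, if_pos hki]
          have hS := sumCh (n := n) k (by omega)
          have h2 : 1 ≤ 2 ^ k := Nat.one_le_two_pow
          omega
      · have hnum : numCh n k = jj n := by rw [numCh, if_neg (by omega), if_neg hki]
        have hS := sumCh (n := n) (ii n + 1) le_rfl
        have hmono : ∑ m ∈ Finset.range (ii n + 1), numCh n m
            ≤ ∑ m ∈ Finset.range k, numCh n m :=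
          Finset.sum_le_sum_of_subset (Finset.range_subset_range.mpr (by omega))
        have hjlt : jj n < 2 ^ (ii n + 1) := jj_lt_pow
        omega)
  have hfin : (fun x => if x ∈ L2 then 0
      else if x = root n then w2 n (root n) + (L2.map (w2 n)).sum else w2 n x) = wfin n := by
    funext x
    match x with
    | Sum.inl () =>
        have hx : ¬ @Membership.mem (Vtx n) (List (Vtx n)) _ L2 (Sum.inl ()) := hroot
        have hcard : w2 n (root n) + (L2.map (w2 n)).sum = Fintype.card (Vtx n) := by
          have : (L2.map (w2 n)).sum = ((L2.take N).map (w2 n)).sum := by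
            rw [← hlen, List.take_length]
          rw [this, htake N le_rfl, hsum1 N]
          rw [cardV]
          have hw : w2 n (root n) = 1 := rfl
          rw [hw, hN]
          omega
        simp only [if_neg hx, if_pos (show @Eq (Vtx n) (Sum.inl ()) (root n) from rfl), hcard]
        simp [wfin, root]
        exact (if_pos rfl).symm
    | Sum.inr (Sum.inl ℓ) =>
        have hx : @Membership.mem (Vtx n) (List (Vtx n)) _ L2 (Sum.inr (Sum.inl ℓ)) := by
          rw [hL2]
          exact List.mem_map.mpr ⟨ℓ, List.mem_finRange ℓ, rfl⟩
        have hne : @Ne (Vtx n) (Sum.inr (Sum.inl ℓ)) (root n) :=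
          fun h => Sum.inl_ne_inr h.symm
        simp [hx, wfin, hne]
    | Sum.inr (Sum.inr s) =>
        have hx : ¬ @Membership.mem (Vtx n) (List (Vtx n)) _ L2 (Sum.inr (Sum.inr s)) := by
          rw [hL2]
          intro hmem
          obtain ⟨ℓ, -, h⟩ := List.mem_map.mp hmem
          rw [chl] at h
          exact Sum.inl_ne_inr (Sum.inr_injective h)
        have hne : @Ne (Vtx n) (Sum.inr (Sum.inr s)) (root n) :=
          fun h => Sum.inl_ne_inr h.symm
        have : w2 n (Sum.inr (Sum.inr s)) = 0 := rfl
        simp [hx, wfin, hne, this]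
  exact reach_w2.trans (hfin ▸ h)

end Stmt13
namespace Stmt13

variable {n : ℕ}

lemma hinj_chl {ℓ m : Fin (1 + ii n + jj n)} (h : chl n ℓ = chl n m) : ℓ = m := by
  rw [chl, chl] at h
  exact Sum.inl_injective (Sum.inr_injective h)

lemma card_pos : 0 < Fintype.card (Vtx n) :=
  Fintype.card_pos_iff.mpr ⟨root n⟩

lemma wfin_max : AcqMaximal (tree n) (wfin n) := by
  rintro ⟨w', u, v, hadj, hu, huv, -⟩
  have hu' : u = root n := by
    by_contra h
    rw [wfin, if_neg h] at hu
    exact Nat.lt_irrefl 0 hu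
  subst hu'
  have hv : v ≠ root n := hadj.ne'
  rw [wfin, if_pos rfl] at hu
  rw [wfin, if_pos rfl, wfin, if_neg hv] at huv
  omega

lemma wfin_res : residualCard (wfin n) = 1 := by
  rw [residualCard, Nat.card_eq_one_iff_exists]
  refine ⟨⟨root n, by rw [wfin, if_pos rfl]; exact card_pos⟩, ?_⟩
  rintro ⟨v, hv⟩
  apply Subtype.ext
  by_contra h
  simp only at h
  rw [wfin, if_neg h] at hv
  exact Nat.lt_irrefl 0 hv

lemma atNum_eq_one (hn : 2 ≤ n) : atNum (tree n) = 1 := by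
  set s := { k | ∃ w, AcqReach (tree n) (fun _ => 1) w ∧ AcqMaximal (tree n) w ∧
    residualCard w = k } with hs
  have h1 : 1 ∈ s := ⟨wfin n, reach_final hn, wfin_max, wfin_res⟩
  have h0 : 0 ∉ s := by
    rintro ⟨w, hr, -, hres⟩
    have hpos : ∃ v, 0 < w v := acq_pos_invariant hr ⟨root n, Nat.one_pos⟩
    obtain ⟨v, hv⟩ := hpos
    have : Nonempty {v : Vtx n // 0 < w v} := ⟨⟨v, hv⟩⟩
    have hcard : 0 < Nat.card {v : Vtx n // 0 < w v} := Nat.card_pos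
    rw [residualCard] at hres
    omega
  apply le_antisymm
  · exact Nat.sInf_le h1
  · rcases Nat.eq_zero_or_pos (sInf s) with h | h
    · exfalso
      rcases Nat.sInf_eq_zero.mp h with h' | h'
      · exact h0 h'
      · rw [h'] at h1; exact h1
    · exact h

lemma reach_root : ∀ u : Vtx n, (tree n).Reachable u (root n) := by
  intro u
  match u with
  | Sum.inl () => exact SimpleGraph.Reachable.refl _
  | Sum.inr (Sum.inl ℓ) => exact (adj_root_chl ℓ).symm.reachable
  | Sum.inr (Sum.inr s) =>
      exact ((adj_chl_grd s).symm.reachable).trans (adj_root_chl s.1).symm.reachable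

lemma tree_connected : (tree n).Connected := by
  rw [SimpleGraph.connected_iff]
  refine ⟨fun u v => (reach_root u).trans (reach_root v).symm, ⟨root n⟩⟩

lemma bridge_root_chl (ℓ : Fin (1 + ii n + jj n)) :
    (tree n).IsBridge s(root n, chl n ℓ) := by
  rw [SimpleGraph.isBridge_iff_adj_and_forall_walk_mem_edges]
  refine fun p => ?_
  apply walk_cross (G := tree n)
    (fun x => x = chl n ℓ ∨ ∃ g : Fin (numCh n ℓ.val), x = grd n ⟨ℓ, g⟩)
  · intro a b hab hna hSb
    rcases adj_cases hab with ⟨m, ⟨rfl, rfl⟩ | ⟨rfl, rfl⟩⟩ | ⟨t, ⟨rfl, rfl⟩ | ⟨rfl, rfl⟩⟩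
    · -- a = root, b = chl m
      rcases hSb with h | ⟨g, h⟩
      · rw [hinj_chl h]
      · exact absurd h (by rw [chl, grd]; exact fun h => Sum.inl_ne_inr (Sum.inr_injective h))
    · -- b = root, a = chl m : S root is false
      rcases hSb with h | ⟨g, h⟩
      · exact absurd h (by rw [root, chl]; exact Sum.inl_ne_inr)
      · exact absurd h (by rw [root, grd]; exact Sum.inl_ne_inr)
    · -- a = chl t.1, b = grd t
      exfalso
      rcases hSb with h | ⟨g, h⟩
      · exact (by rw [grd, chl] at h; exact Sum.inr_ne_inl (Sum.inr_injective h) : False)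
      · rw [grd, grd] at h
        have ht : t = ⟨ℓ, g⟩ := Sum.inr_injective (Sum.inr_injective h)
        apply hna
        left
        rw [ht]
    · -- b = chl t.1, a = grd t
      exfalso
      rcases hSb with h | ⟨g, h⟩
      · have ht : t.1 = ℓ := hinj_chl h
        apply hna
        right
        obtain ⟨m, x⟩ := t
        subst ht
        exact ⟨x, rfl⟩
      · rw [chl, grd] at h
        exact Sum.inl_ne_inr (Sum.inr_injective h)
  · -- ¬ S root
    rintro (h | ⟨g, h⟩)
    · exact Sum.inl_ne_inr h
    · exact Sum.inl_ne_inr h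
  · -- S (chl ℓ)
    exact Or.inl rfl

lemma bridge_chl_grd (s : Σ ℓ : Fin (1 + ii n + jj n), Fin (numCh n ℓ.val)) :
    (tree n).IsBridge s(chl n s.1, grd n s) := by
  rw [SimpleGraph.isBridge_iff_adj_and_forall_walk_mem_edges]
  refine fun p => ?_
  apply walk_cross (G := tree n) (fun x => x = grd n s)
  · intro a b hab hna hSb
    rcases adj_cases hab with ⟨m, ⟨rfl, rfl⟩ | ⟨rfl, rfl⟩⟩ | ⟨t, ⟨rfl, rfl⟩ | ⟨rfl, rfl⟩⟩
    · exact absurd hSb (by rw [chl, grd]; exact fun h => Sum.inl_ne_inr (Sum.inr_injective h))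
    · exact absurd hSb (by rw [root, grd]; exact Sum.inl_ne_inr)
    · have ht : t = s := Sum.inr_injective (Sum.inr_injective hSb)
      subst ht
      rfl
    · exact absurd hSb (by rw [chl, grd]; exact fun h => Sum.inl_ne_inr (Sum.inr_injective h))
  · -- ¬ (chl s.1 = grd s)
    rw [chl, grd]
    exact fun h => Sum.inl_ne_inr (Sum.inr_injective h)
  · rfl

lemma tree_acyclic : (tree n).IsAcyclic := by
  rw [SimpleGraph.isAcyclic_iff_forall_adj_isBridge]
  intro a b hab
  rcases adj_cases hab with ⟨m, ⟨rfl, rfl⟩ | ⟨rfl, rfl⟩⟩ | ⟨t, ⟨rfl, rfl⟩ | ⟨rfl, rfl⟩⟩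
  · exact bridge_root_chl m
  · rw [Sym2.eq_swap]; exact bridge_root_chl m
  · exact bridge_chl_grd t
  · rw [Sym2.eq_swap]; exact bridge_chl_grd t

lemma tree_isTree : (tree n).IsTree := ⟨tree_connected, tree_acyclic⟩

end Stmt13
namespace Stmt13

variable {n : ℕ}

lemma card_lower (hn : 2 ≤ n) : (n : ℝ) / 2 ≤ (Fintype.card (Vtx n) : ℝ) := by
  have h0 : (0 : ℝ) ≤ (n : ℝ) / 2 := by positivity
  have hs : Real.sqrt ((n : ℝ) / 2) ≤ (jj n : ℝ) := Nat.le_ceil _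
  have h1 : (n : ℝ) / 2 ≤ (jj n : ℝ) * (jj n : ℝ) := by
    nlinarith [Real.sq_sqrt h0, Real.sqrt_nonneg ((n : ℝ) / 2)]
  have h2 : jj n * jj n ≤ Fintype.card (Vtx n) := by rw [cardV']; exact Nat.le_add_left _ _
  have h2' : ((jj n * jj n : ℕ) : ℝ) ≤ (Fintype.card (Vtx n) : ℝ) := by exact_mod_cast h2
  push_cast at h2'
  linarith

lemma card_upper (hn : 2 ≤ n) :
    (Fintype.card (Vtx n) : ℝ) ≤ (n : ℝ) / 2 + 5 * Real.sqrt ((n : ℝ) / 2) + 4 := by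
  have hnat : Fintype.card (Vtx n) ≤ jj n * jj n + 3 * jj n := by
    rw [cardV']
    have h1 : 2 ^ ii n ≤ jj n := pow_ii_le hn
    have h2 : 2 ^ (ii n + 1) = 2 * 2 ^ ii n := by ring
    omega
  have h0 : (0 : ℝ) ≤ (n : ℝ) / 2 := by positivity
  set s := Real.sqrt ((n : ℝ) / 2) with hsdef
  have hs0 : 0 ≤ s := Real.sqrt_nonneg _
  have hss : s * s = (n : ℝ) / 2 := Real.mul_self_sqrt h0
  have hjr : (jj n : ℝ) ≤ s + 1 := le_of_lt (Nat.ceil_lt_add_one hs0)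
  have hj0 : (0 : ℝ) ≤ (jj n : ℝ) := Nat.cast_nonneg _
  have hnat' : (Fintype.card (Vtx n) : ℝ) ≤ (jj n : ℝ) * (jj n : ℝ) + 3 * (jj n : ℝ) := by
    exact_mod_cast hnat
  nlinarith

end Stmt13


open Stmt13 in
/-- The explicitly constructed rooted tree `T` (root `v` with children
`v_0, …, v_{i+j}`, where `j = ⌈√(n/2)⌉`, `i` is largest with `2^i ≤ j`, `v_0` is a leaf,
`v_ℓ` has `2^ℓ − 1` leaf children for `1 ≤ ℓ ≤ i` and `j` leaf children otherwise) is a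
tree on `m ≥ n/2` vertices, with `|V(T)| ≤ (1 + o(1))·n/2`, whose root can acquire all
the weight; in particular `a_t(T) = 1`. -/
theorem stmt13 :
    (∀ n : ℕ, 2 ≤ n →
      (tree n).IsTree ∧
      (n : ℝ) / 2 ≤ Fintype.card (Vtx n) ∧
      (∃ w, AcqReach (tree n) (fun _ => 1) w ∧ w (root n) = Fintype.card (Vtx n)) ∧
      atNum (tree n) = 1) ∧
    Tendsto (fun n : ℕ => (Fintype.card (Vtx n) : ℝ) / ((n : ℝ) / 2)) atTop (nhds 1) := by
  constructor
  · intro n hn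
    refine ⟨tree_isTree, card_lower hn, ⟨wfin n, reach_final hn, ?_⟩, atNum_eq_one hn⟩
    rw [wfin, if_pos rfl]
  · -- the limit
    have hsqrt : Tendsto (fun n : ℕ => Real.sqrt ((n : ℝ) / 2)) atTop atTop := by
      rw [tendsto_atTop_atTop]
      intro b
      refine ⟨⌈2 * b ^ 2⌉₊ + 2, fun m hm => ?_⟩
      rcases le_or_gt b 0 with hb | hb
      · exact hb.trans (Real.sqrt_nonneg _)
      · rw [show b = Real.sqrt (b ^ 2) from (Real.sqrt_sq hb.le).symm]
        apply Real.sqrt_le_sqrt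
        have h1 : (⌈2 * b ^ 2⌉₊ : ℝ) ≤ (m : ℝ) := by
          have : ⌈2 * b ^ 2⌉₊ ≤ m := by omega
          exact_mod_cast this
        have h2 : 2 * b ^ 2 ≤ (⌈2 * b ^ 2⌉₊ : ℝ) := Nat.le_ceil _
        linarith
    have hupper : Tendsto (fun n : ℕ => 1 + 5 / Real.sqrt ((n : ℝ) / 2) + 8 / (n : ℝ))
        atTop (nhds 1) := by
      have h1 : Tendsto (fun n : ℕ => 5 / Real.sqrt ((n : ℝ) / 2)) atTop (nhds 0) :=
        Tendsto.div_atTop tendsto_const_nhds hsqrt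
      have h2 : Tendsto (fun n : ℕ => 8 / (n : ℝ)) atTop (nhds 0) :=
        tendsto_const_div_atTop_nhds_zero_nat 8
      have := (tendsto_const_nhds (x := (1 : ℝ)) (f := atTop (α := ℕ))).add h1 |>.add h2
      simpa using this
    apply tendsto_of_tendsto_of_tendsto_of_le_of_le' tendsto_const_nhds hupper
    · -- eventually 1 ≤ f n
      filter_upwards [eventually_ge_atTop 2] with n hn
      have hpos : (0 : ℝ) < (n : ℝ) / 2 := by
        have : (2 : ℝ) ≤ (n : ℝ) := by exact_mod_cast hn
        linarith
      rw [le_div_iff₀ hpos, one_mul]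
      exact card_lower hn
    · -- eventually f n ≤ upper n
      filter_upwards [eventually_ge_atTop 2] with n hn
      have h2r : (2 : ℝ) ≤ (n : ℝ) := by exact_mod_cast hn
      have hpos : (0 : ℝ) < (n : ℝ) / 2 := by linarith
      have hnpos : (0 : ℝ) < (n : ℝ) := by linarith
      set s := Real.sqrt ((n : ℝ) / 2) with hsdef
      have hs0 : 0 < s := Real.sqrt_pos.mpr hpos
      have hss : s * s = (n : ℝ) / 2 := Real.mul_self_sqrt hpos.le
      rw [div_le_iff₀ hpos]
      have hcu := card_upper hn
      have e1 : (5 / s) * ((n : ℝ) / 2) = 5 * s := by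
        rw [← hss]
        field_simp
      have e2 : (8 / (n : ℝ)) * ((n : ℝ) / 2) = 4 := by
        field_simp
        ring
      calc (Fintype.card (Vtx n) : ℝ) ≤ (n : ℝ) / 2 + 5 * s + 4 := hcu
        _ = 1 * ((n : ℝ) / 2) + (5 / s) * ((n : ℝ) / 2) + (8 / (n : ℝ)) * ((n : ℝ) / 2) := by
            rw [e1, e2]; ring
        _ = (1 + 5 / s + 8 / (n : ℝ)) * ((n : ℝ) / 2) := by ring
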